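/- For a parsing expression grammar G=(N,Σ,P,S) and strings w,w'∈Σ*: (S,w)⇝_G w' if and only if S⇒⁺_w w' (where ⇒⁺_w is the transitive closure of the PEG derivation step relation ⇒_w); moreover, S⇒⁺_w w' implies S⇒⁺ w' in the corresponding context-free grammar obtained by replacing prioritized choice '/' by nondeterministic choice '|'. -/

import Mathlib

namespace Ocfg

/-- A symbol: nonterminal or terminal. -/
inductive Sym (N T : Type) : Type
  | nt : N → Sym N T
  | tm : T → Sym N T

/-- An (ordered) context-free grammar: each nonterminal has an ordered
list of right-hand sides; `start` is the start nonterminal. -/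
structure OCFG (N T : Type) : Type where
  prods : N → List (List (Sym N T))
  start : N

/-- Ordered ranked trees used as parse trees: terminal leaves, ε-leaves,
and internal nodes labelled by a nonterminal together with the index of
the rule applied there. -/
inductive PTree (N T : Type) : Type
  | leaf : T → PTree N T
  | eps  : PTree N T
  | node : N → ℕ → List (PTree N T) → PTree N T

mutual
/-- `ParseFrom G A w t`: `t` is a parse tree with root nonterminal `A`
and yield `w`. -/
inductive ParseFrom {N T : Type} (G : OCFG N T) : N → List T → PTree N T → Prop
  | epsNode (A : N) (i : ℕ) :
      (G.prods A)[i]? = some [] →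
      ParseFrom G A [] (PTree.node A i [PTree.eps])
  | node (A : N) (i : ℕ) (r : List (Sym N T)) (w : List T) (cs : List (PTree N T)) :
      (G.prods A)[i]? = some r → r ≠ [] → ParseSeq G r w cs →
      ParseFrom G A w (PTree.node A i cs)

/-- `ParseSeq G r w cs`: the trees `cs` match, in order, the symbols of `r`,
with concatenated yield `w`. -/
inductive ParseSeq {N T : Type} (G : OCFG N T) : List (Sym N T) → List T → List (PTree N T) → Prop
  | nil : ParseSeq G [] [] []
  | consTm (a : T) (r : List (Sym N T)) (w : List T) (cs : List (PTree N T)) :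
      ParseSeq G r w cs →
      ParseSeq G (Sym.tm a :: r) (a :: w) (PTree.leaf a :: cs)
  | consNt (A : N) (t : PTree N T) (wA : List T) (r : List (Sym N T)) (w : List T)
      (cs : List (PTree N T)) :
      ParseFrom G A wA t → ParseSeq G r w cs →
      ParseSeq G (Sym.nt A :: r) (wA ++ w) (t :: cs)
end

/-- The set `P_G(w)` of parse trees of `w`. -/
def parseTrees {N T : Type} (G : OCFG N T) (w : List T) : Set (PTree N T) :=
  {t | ParseFrom G G.start w t}

/-- `n(t)`: the sequence of rule indices of `t`, in pre-order. -/
def PTree.idxSeq {N T : Type} : PTree N T → List ℕ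
  | .leaf _ => []
  | .eps => []
  | .node _ i cs => i :: (cs.attach.map (fun c => PTree.idxSeq c.1)).flatten
decreasing_by
  have := List.sizeOf_lt_of_mem c.2
  simp_wf
  omega

/-- The order `≺_G` on parse trees: lexicographic comparison of the
pre-order rule-index sequences. -/
def treeLT {N T : Type} (t₁ t₂ : PTree N T) : Prop :=
  List.Lex (· < ·) t₁.idxSeq t₂.idxSeq

/-- One-step derivation relation `⇒` of the underlying CFG. -/
def OCFG.Step {N T : Type} (G : OCFG N T) (u v : List (Sym N T)) : Prop :=
  ∃ (u₁ u₂ : List (Sym N T)) (A : N) (r : List (Sym N T)),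
    r ∈ G.prods A ∧ u = u₁ ++ Sym.nt A :: u₂ ∧ v = u₁ ++ r ++ u₂

/-- `⇒*`. -/
def OCFG.Derives {N T : Type} (G : OCFG N T) : List (Sym N T) → List (Sym N T) → Prop :=
  Relation.ReflTransGen G.Step

/-- A nonterminal is useful if it occurs in some sentential form derivable from
the start symbol and derives some terminal string. -/
def Useful {N T : Type} (G : OCFG N T) (A : N) : Prop :=
  (∃ u₁ u₂ : List (Sym N T), G.Derives [Sym.nt G.start] (u₁ ++ Sym.nt A :: u₂)) ∧
  (∃ w : List T, G.Derives [Sym.nt A] (w.map Sym.tm))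

/-- `G` is cyclic if `A ⇒⁺ A` for some nonterminal `A`. -/
def Cyclic {N T : Type} (G : OCFG N T) : Prop :=
  ∃ A : N, Relation.TransGen G.Step [Sym.nt A] [Sym.nt A]

/-- `G` has no ε-rules. -/
def NoEpsRules {N T : Type} (G : OCFG N T) : Prop :=
  ∀ (A : N) (r : List (Sym N T)), r ∈ G.prods A → r ≠ []

/-- A unit-rule step: `A → B` is a rule of `G`. -/
def UnitStep {N T : Type} (G : OCFG N T) (A B : N) : Prop :=
  [Sym.nt B] ∈ G.prods A

/-- `G` has a cycle of unit rules. -/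
def HasUnitCycle {N T : Type} (G : OCFG N T) : Prop :=
  ∃ A : N, Relation.TransGen (UnitStep G) A A

/-- `G` is well-ordered: for every string `w`, every nonempty subset of
`P_G(w)` has a `≺_G`-least element. -/
def WellOrderedG {N T : Type} (G : OCFG N T) : Prop :=
  ∀ (w : List T) (Φ : Set (PTree N T)), Φ ⊆ parseTrees G w → Φ.Nonempty →
    ∃ t ∈ Φ, ∀ t' ∈ Φ, t = t' ∨ treeLT t t'

/-- `t` is the `≺_G`-least parse tree of `w`. -/
def IsLeastTree {N T : Type} (G : OCFG N T) (w : List T) (t : PTree N T) : Prop :=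
  ParseFrom G G.start w t ∧ ∀ t', ParseFrom G G.start w t' → t = t' ∨ treeLT t t'

/-- `G` has least parse trees. -/
def HasLeastTrees {N T : Type} (G : OCFG N T) : Prop :=
  ∀ w : List T, (parseTrees G w).Nonempty → ∃ t, IsLeastTree G w t

/-- Derivations of a given length (number of steps). -/
inductive DerivesIn {N T : Type} (G : OCFG N T) : List (Sym N T) → List (Sym N T) → ℕ → Prop
  | refl (u : List (Sym N T)) : DerivesIn G u u 0
  | step (u v w : List (Sym N T)) (n : ℕ) :
      G.Step u v → DerivesIn G v w n → DerivesIn G u w (n + 1)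

/-- Number of rule applications in a parse tree (= length of the
corresponding leftmost derivation). -/
def PTree.numRules {N T : Type} : PTree N T → ℕ
  | .leaf _ => 0
  | .eps => 0
  | .node _ _ cs => 1 + ((cs.attach.map (fun c => PTree.numRules c.1)).foldr (· + ·) 0)
decreasing_by
  have := List.sizeOf_lt_of_mem c.2
  simp_wf
  omega

/-- Height of a tree: a single leaf has height 0. -/
def PTree.height {N T : Type} : PTree N T → ℕ
  | .leaf _ => 0
  | .eps => 0
  | .node _ _ cs => 1 + ((cs.attach.map (fun c => PTree.height c.1)).foldr max 0)
decreasing_by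
  have := List.sizeOf_lt_of_mem c.2
  simp_wf
  omega

/-- The language of `G`. -/
def langOf {N T : Type} (G : OCFG N T) : Language T :=
  {w | ∃ t, ParseFrom G G.start w t}

end Ocfg

namespace Ocfg

mutual
/-- PEG matching semantics `(e,x) ⇝_G o` for a sequence expression `e`:
`o = some x₁` means success consuming the prefix `x₁` of `x`,
`o = none` means failure `f`. -/
inductive SMatch {N T : Type} (G : OCFG N T) : List (Sym N T) → List T → Option (List T) → Prop
  | nil (x : List T) : SMatch G [] x (some [])
  | tmOk (a : T) (e : List (Sym N T)) (x x₂ : List T) :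
      SMatch G e x (some x₂) →
      SMatch G (Sym.tm a :: e) (a :: x) (some (a :: x₂))
  | tmRestFail (a : T) (e : List (Sym N T)) (x : List T) :
      SMatch G e x none →
      SMatch G (Sym.tm a :: e) (a :: x) none
  | tmFailEmpty (a : T) (e : List (Sym N T)) :
      SMatch G (Sym.tm a :: e) [] none
  | tmFailMismatch (a b : T) (e : List (Sym N T)) (x : List T) :
      a ≠ b →
      SMatch G (Sym.tm a :: e) (b :: x) none
  | ntOk (A : N) (e : List (Sym N T)) (x₁ y x₂ : List T) :
      ChoiceMatch G (G.prods A) (x₁ ++ y) (some x₁) →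
      SMatch G e y (some x₂) →
      SMatch G (Sym.nt A :: e) (x₁ ++ y) (some (x₁ ++ x₂))
  | ntFail (A : N) (e : List (Sym N T)) (x : List T) :
      ChoiceMatch G (G.prods A) x none →
      SMatch G (Sym.nt A :: e) x none
  | ntRestFail (A : N) (e : List (Sym N T)) (x₁ y : List T) :
      ChoiceMatch G (G.prods A) (x₁ ++ y) (some x₁) →
      SMatch G e y none →
      SMatch G (Sym.nt A :: e) (x₁ ++ y) none

/-- Prioritized choice `e₁/e₂/…/e_n`: try the alternatives in order. -/
inductive ChoiceMatch {N T : Type} (G : OCFG N T) : List (List (Sym N T)) → List T → Option (List T) → Prop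
  | nilFail (x : List T) : ChoiceMatch G [] x none
  | headOk (e : List (Sym N T)) (es : List (List (Sym N T))) (x x₁ : List T) :
      SMatch G e x (some x₁) →
      ChoiceMatch G (e :: es) x (some x₁)
  | headFail (e : List (Sym N T)) (es : List (List (Sym N T))) (x : List T) (o : Option (List T)) :
      SMatch G e x none → ChoiceMatch G es x o →
      ChoiceMatch G (e :: es) x o
end

/-- The PEG derivation step `u ⇒_w v`: rewrite the leftmost nonterminal `A`
of `u = u' A u₂` (`u' ∈ Σ*`) using the first alternative of the production
for `A` that does not fail on `w` (prefixed with `u'`). -/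
def PStep {N T : Type} (G : OCFG N T) (w : List T) (u v : List (Sym N T)) : Prop :=
  ∃ (u' : List T) (A : N) (u₂ : List (Sym N T)) (i : ℕ) (r : List (Sym N T)),
    (G.prods A)[i]? = some r ∧
    u = u'.map Sym.tm ++ Sym.nt A :: u₂ ∧
    v = u'.map Sym.tm ++ r ++ u₂ ∧
    (∃ v' : List T, SMatch G (u'.map Sym.tm ++ r) w (some (u' ++ v'))) ∧
    (∀ (j : ℕ) (r' : List (Sym N T)), j < i → (G.prods A)[j]? = some r' →
      SMatch G (u'.map Sym.tm ++ r') w none)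

end Ocfg

open Ocfg
namespace Ocfg
variable {N T : Type}
attribute [local instance] Classical.propDecidable

mutual
noncomputable def evalS (G : OCFG N T) : ℕ → List (Sym N T) → List T → Option (Option (List T × ℕ))
  | _, [], _ => some (some ([], 0))
  | _, .tm _ :: _, [] => some none
  | n, .tm a :: e, b :: x =>
      if a = b then
        match evalS G n e x with
        | none => none
        | some none => some none
        | some (some (z, c)) => some (some (a :: z, c))
      else some none
  | 0, .nt _ :: _, _ => none
  | (n+1), .nt A :: e, x =>
      match evalC G n (G.prods A) x with
      | none => none
      | some none => some none
      | some (some (x₁, c₁)) =>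
        match evalS G (n+1) e (x.drop x₁.length) with
        | none => none
        | some none => some none
        | some (some (z, c₂)) => some (some (x₁ ++ z, 1 + c₁ + c₂))
  termination_by n e _ => (n, e.length)

noncomputable def evalC (G : OCFG N T) : ℕ → List (List (Sym N T)) → List T → Option (Option (List T × ℕ))
  | _, [], _ => some none
  | 0, _ :: _, _ => none
  | n+1, r :: rs, x =>
      match evalS G n r x with
      | none => none
      | some none => evalC G (n+1) rs x
      | some (some res) => some (some res)
  termination_by n rs _ => (n, rs.length)
end

end Ocfg
namespace Ocfg
variable {N T : Type}
attribute [local instance] Classical.propDecidable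

@[simp] theorem evalS_nil (G : OCFG N T) (n : ℕ) (x : List T) :
    evalS G n [] x = some (some ([], 0)) := by rw [evalS.eq_def]

@[simp] theorem evalS_tm_nil (G : OCFG N T) (n : ℕ) (a : T) (e : List (Sym N T)) :
    evalS G n (Sym.tm a :: e) [] = some none := by rw [evalS.eq_def]

theorem evalS_tm_cons (G : OCFG N T) (n : ℕ) (a b : T) (e : List (Sym N T)) (x : List T) :
    evalS G n (Sym.tm a :: e) (b :: x) =
      if a = b then
        match evalS G n e x with
        | none => none
        | some none => some none
        | some (some (z, c)) => some (some (a :: z, c))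
      else some none := by rw [evalS.eq_def]

@[simp] theorem evalS_nt_zero (G : OCFG N T) (A : N) (e : List (Sym N T)) (x : List T) :
    evalS G 0 (Sym.nt A :: e) x = none := by rw [evalS.eq_def]

theorem evalS_nt_succ (G : OCFG N T) (n : ℕ) (A : N) (e : List (Sym N T)) (x : List T) :
    evalS G (n+1) (Sym.nt A :: e) x =
      match evalC G n (G.prods A) x with
      | none => none
      | some none => some none
      | some (some (x₁, c₁)) =>
        match evalS G (n+1) e (x.drop x₁.length) with
        | none => none
        | some none => some none
        | some (some (z, c₂)) => some (some (x₁ ++ z, 1 + c₁ + c₂)) := by rw [evalS.eq_def]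

@[simp] theorem evalC_nil (G : OCFG N T) (n : ℕ) (x : List T) :
    evalC G n [] x = some none := by rw [evalC.eq_def]

@[simp] theorem evalC_zero (G : OCFG N T) (r : List (Sym N T)) (rs : List (List (Sym N T))) (x : List T) :
    evalC G 0 (r :: rs) x = none := by rw [evalC.eq_def]

theorem evalC_succ (G : OCFG N T) (n : ℕ) (r : List (Sym N T)) (rs : List (List (Sym N T))) (x : List T) :
    evalC G (n+1) (r :: rs) x =
      match evalS G n r x with
      | none => none
      | some none => evalC G (n+1) rs x
      | some (some res) => some (some res) := by rw [evalC.eq_def]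

end Ocfg
namespace Ocfg
variable {N T : Type}

theorem mono_aux (G : OCFG N T) : ∀ n : ℕ,
    (∀ e (x : List T) o m, evalS G n e x = some o → n ≤ m → evalS G m e x = some o) ∧
    (∀ rs (x : List T) o m, evalC G n rs x = some o → n ≤ m → evalC G m rs x = some o) := by
  intro n
  induction n using Nat.strong_induction_on with
  | _ n IHo =>
    constructor
    · intro e
      induction e with
      | nil => intro x o m h _; simpa using h
      | cons s e' ihe =>
        intro x o m h hnm
        cases s with
        | tm a =>
          cases x with
          | nil => simpa using h
          | cons b x =>
            rw [evalS_tm_cons] at h ⊢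
            by_cases hab : a = b
            · simp only [hab, if_pos rfl] at h ⊢
              rcases he : evalS G n e' x with _ | o' <;> rw [he] at h
              · exact absurd h (by simp)
              · rw [ihe _ _ _ he hnm]; exact h
            · simp only [if_neg hab] at h ⊢; exact h
        | nt A =>
          cases n with
          | zero => simp at h
          | succ k =>
            cases m with
            | zero => omega
            | succ l =>
              rw [evalS_nt_succ] at h ⊢
              rcases hc : evalC G k (G.prods A) x with _ | oc <;> rw [hc] at h
              · exact absurd h (by simp)
              · rw [(IHo k (by omega)).2 _ _ _ l hc (by omega)]
                cases oc with
                | none => dsimp only at h ⊢; exact h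
                | some p =>
                  obtain ⟨x₁, c₁⟩ := p
                  dsimp only at h ⊢
                  rcases hs : evalS G (k+1) e' (x.drop x₁.length) with _ | os <;> rw [hs] at h
                  · exact absurd h (by simp)
                  · rw [ihe _ _ _ hs (by omega)]; exact h
    · intro rs
      induction rs with
      | nil => intro x o m h _; simpa using h
      | cons r rs' ihrs =>
        intro x o m h hnm
        cases n with
        | zero => simp at h
        | succ k =>
          cases m with
          | zero => omega
          | succ l =>
            rw [evalC_succ] at h ⊢
            rcases hs : evalS G k r x with _ | os <;> rw [hs] at h
            · exact absurd h (by simp)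
            · rw [(IHo k (by omega)).1 _ _ _ l hs (by omega)]
              cases os with
              | none => dsimp only at h ⊢; exact ihrs _ _ _ h hnm
              | some res => dsimp only at h ⊢; exact h

theorem evalS_mono (G : OCFG N T) {n m : ℕ} {e : List (Sym N T)} {x : List T} {o}
    (h : evalS G n e x = some o) (hnm : n ≤ m) : evalS G m e x = some o :=
  (mono_aux G n).1 e x o m h hnm

theorem evalC_mono (G : OCFG N T) {n m : ℕ} {rs : List (List (Sym N T))} {x : List T} {o}
    (h : evalC G n rs x = some o) (hnm : n ≤ m) : evalC G m rs x = some o :=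
  (mono_aux G n).2 rs x o m h hnm

end Ocfg
namespace Ocfg
variable {N T : Type}

theorem prefix_aux (G : OCFG N T) : ∀ n : ℕ,
    (∀ e (x z : List T) c, evalS G n e x = some (some (z, c)) → z ++ x.drop z.length = x) ∧
    (∀ rs (x z : List T) c, evalC G n rs x = some (some (z, c)) → z ++ x.drop z.length = x) := by
  intro n
  induction n using Nat.strong_induction_on with
  | _ n IHo =>
    constructor
    · intro e
      induction e with
      | nil => intro x z c h; simp at h; simp [h.1]
      | cons s e' ihe =>
        intro x z c h
        cases s with
        | tm a =>
          cases x with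
          | nil => simp at h
          | cons b x =>
            rw [evalS_tm_cons] at h
            by_cases hab : a = b
            · simp only [hab, if_pos rfl] at h
              rcases he : evalS G n e' x with _ | o' <;> rw [he] at h
              · exact absurd h (by simp)
              · rcases o' with _ | ⟨z', c'⟩ <;> dsimp only at h
                · exact absurd h (by simp)
                · obtain ⟨rfl, rfl⟩ : b :: z' = z ∧ c' = c := by
                    simpa [hab] using h
                  have := ihe _ _ _ he
                  simpa using this
            · simp [if_neg hab] at h
        | nt A =>
          cases n with
          | zero => simp at h
          | succ k =>
            rw [evalS_nt_succ] at h
            rcases hc : evalC G k (G.prods A) x with _ | oc <;> rw [hc] at h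
            · exact absurd h (by simp)
            · rcases oc with _ | ⟨x₁, c₁⟩ <;> dsimp only at h
              · exact absurd h (by simp)
              · rcases hs : evalS G (k+1) e' (x.drop x₁.length) with _ | os <;> rw [hs] at h
                · exact absurd h (by simp)
                · rcases os with _ | ⟨z₂, c₂⟩ <;> dsimp only at h
                  · exact absurd h (by simp)
                  · obtain ⟨rfl, rfl⟩ : x₁ ++ z₂ = z ∧ 1 + c₁ + c₂ = c := by simpa using h
                    have h1 := (IHo k (by omega)).2 _ _ _ _ hc
                    have h2 := ihe _ _ _ hs
                    calc (x₁ ++ z₂) ++ x.drop (x₁ ++ z₂).length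
                        = x₁ ++ (z₂ ++ (x.drop x₁.length).drop z₂.length) := by
                          simp [List.drop_drop, List.append_assoc, Nat.add_comm]
                      _ = x₁ ++ x.drop x₁.length := by rw [h2]
                      _ = x := h1
    · intro rs
      induction rs with
      | nil => intro x z c h; simp at h
      | cons r rs' ihrs =>
        intro x z c h
        cases n with
        | zero => simp at h
        | succ k =>
          rw [evalC_succ] at h
          rcases hs : evalS G k r x with _ | os <;> rw [hs] at h
          · exact absurd h (by simp)
          · rcases os with _ | ⟨z', c'⟩ <;> dsimp only at h
            · exact ihrs _ _ _ h
            · obtain ⟨rfl, rfl⟩ : z' = z ∧ c' = c := by simpa using h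
              exact (IHo k (by omega)).1 _ _ _ _ hs

theorem evalS_prefix (G : OCFG N T) {n : ℕ} {e : List (Sym N T)} {x z : List T} {c : ℕ}
    (h : evalS G n e x = some (some (z, c))) : z ++ x.drop z.length = x :=
  (prefix_aux G n).1 e x z c h

theorem evalC_prefix (G : OCFG N T) {n : ℕ} {rs : List (List (Sym N T))} {x z : List T} {c : ℕ}
    (h : evalC G n rs x = some (some (z, c))) : z ++ x.drop z.length = x :=
  (prefix_aux G n).2 rs x z c h

end Ocfg
namespace Ocfg
variable {N T : Type}

theorem sound_aux (G : OCFG N T) : ∀ n : ℕ,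
    (∀ e (x : List T) o', evalS G n e x = some o' →
        SMatch G e x (o'.map Prod.fst)) ∧
    (∀ rs (x : List T) o', evalC G n rs x = some o' →
        ChoiceMatch G rs x (o'.map Prod.fst)) := by
  intro n
  induction n using Nat.strong_induction_on with
  | _ n IHo =>
    constructor
    · intro e
      induction e with
      | nil =>
        intro x o' h
        simp only [evalS_nil, Option.some_inj] at h
        subst h; exact SMatch.nil x
      | cons s e' ihe =>
        intro x o' h
        cases s with
        | tm a =>
          cases x with
          | nil =>
            simp only [evalS_tm_nil, Option.some_inj] at h
            subst h; exact SMatch.tmFailEmpty a e'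
          | cons b x =>
            rw [evalS_tm_cons] at h
            by_cases hab : a = b
            · subst hab
              simp only [if_pos rfl] at h
              rcases he : evalS G n e' x with _ | o'' <;> rw [he] at h
              · exact absurd h (by simp)
              · rcases o'' with _ | ⟨z, c⟩ <;> dsimp only at h <;>
                  rw [← Option.some_inj.mp h]
                · exact SMatch.tmRestFail a e' x (ihe _ _ he)
                · exact SMatch.tmOk a e' x z (ihe _ _ he)
            · rw [if_neg hab, Option.some_inj] at h
              rw [← h]
              exact SMatch.tmFailMismatch a b e' x hab
        | nt A =>
          cases n with
          | zero => simp at h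
          | succ k =>
            rw [evalS_nt_succ] at h
            rcases hc : evalC G k (G.prods A) x with _ | oc <;> rw [hc] at h
            · exact absurd h (by simp)
            · have hcm := (IHo k (by omega)).2 _ _ _ hc
              rcases oc with _ | ⟨x₁, c₁⟩ <;> dsimp only at h
              · rw [← Option.some_inj.mp h]
                exact SMatch.ntFail A e' x hcm
              · have hx : x₁ ++ x.drop x₁.length = x := evalC_prefix G hc
                rcases hs : evalS G (k+1) e' (x.drop x₁.length) with _ | os <;> rw [hs] at h
                · exact absurd h (by simp)
                · have hsm := ihe _ _ hs
                  rcases os with _ | ⟨z, c₂⟩ <;> dsimp only at h <;>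
                    rw [← Option.some_inj.mp h]
                  · rw [← hx] at hcm ⊢
                    exact SMatch.ntRestFail A e' x₁ _ hcm hsm
                  · rw [← hx] at hcm ⊢
                    exact SMatch.ntOk A e' x₁ _ z hcm hsm
    · intro rs
      induction rs with
      | nil =>
        intro x o' h
        simp only [evalC_nil, Option.some_inj] at h
        rw [← h]; exact ChoiceMatch.nilFail x
      | cons r rs' ihrs =>
        intro x o' h
        cases n with
        | zero => simp at h
        | succ k =>
          rw [evalC_succ] at h
          rcases hs : evalS G k r x with _ | os <;> rw [hs] at h
          · exact absurd h (by simp)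
          · have hsm := (IHo k (by omega)).1 _ _ _ hs
            rcases os with _ | ⟨z, c⟩ <;> dsimp only at h
            · exact ChoiceMatch.headFail r rs' x _ hsm (ihrs _ _ h)
            · rw [← Option.some_inj.mp h]
              exact ChoiceMatch.headOk r rs' x z hsm

theorem evalS_sound (G : OCFG N T) {n : ℕ} {e : List (Sym N T)} {x : List T} {o'}
    (h : evalS G n e x = some o') : SMatch G e x (o'.map Prod.fst) :=
  (sound_aux G n).1 e x o' h

end Ocfg
namespace Ocfg
variable {N T : Type}
attribute [local instance] Classical.propDecidable

theorem complete_S {G : OCFG N T} {e : List (Sym N T)} {x : List T} {o : Option (List T)}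
    (h : SMatch G e x o) :
    ∃ n o', evalS G n e x = some o' ∧ o = o'.map Prod.fst := by
  refine SMatch.rec (G := G)
    (motive_1 := fun e x o _ => ∃ n o', evalS G n e x = some o' ∧ o = o'.map Prod.fst)
    (motive_2 := fun rs x o _ => ∃ n o', evalC G n rs x = some o' ∧ o = o'.map Prod.fst)
    ?_ ?_ ?_ ?_ ?_ ?_ ?_ ?_ ?_ ?_ ?_ h
  · intro x
    exact ⟨0, some ([], 0), by simp, rfl⟩
  · rintro a e x x₂ hm ⟨n, o', he, ho⟩
    rcases o' with _ | ⟨z, c⟩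
    · simp at ho
    · simp only [Option.map_some, Option.some_inj] at ho
      refine ⟨n, some (a :: z, c), ?_, by simp [ho]⟩
      rw [evalS_tm_cons]; simp [he]
  · rintro a e x hm ⟨n, o', he, ho⟩
    rcases o' with _ | ⟨z, c⟩
    · refine ⟨n, none, ?_, rfl⟩
      rw [evalS_tm_cons]; simp [he]
    · simp at ho
  · intro a e
    exact ⟨0, none, by simp, rfl⟩
  · intro a b e x hne
    refine ⟨0, none, ?_, rfl⟩
    rw [evalS_tm_cons]; simp [hne]
  · rintro A e x₁ y x₂ hc hs ⟨n₁, o₁, hc', ho₁⟩ ⟨n₂, o₂, hs', ho₂⟩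
    rcases o₁ with _ | ⟨z₁, c₁⟩; · simp at ho₁
    rcases o₂ with _ | ⟨z₂, c₂⟩; · simp at ho₂
    simp only [Option.map_some, Option.some_inj] at ho₁ ho₂
    subst ho₁; subst ho₂
    refine ⟨max n₁ n₂ + 1, some (x₁ ++ x₂, 1 + c₁ + c₂), ?_, rfl⟩
    rw [evalS_nt_succ, evalC_mono G hc' (Nat.le_max_left n₁ n₂)]
    dsimp only
    rw [List.drop_left, evalS_mono G hs' (by omega : n₂ ≤ max n₁ n₂ + 1)]
  · rintro A e x hc ⟨n₁, o₁, hc', ho₁⟩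
    rcases o₁ with _ | ⟨z₁, c₁⟩
    · refine ⟨n₁ + 1, none, ?_, rfl⟩
      rw [evalS_nt_succ, hc']
    · simp at ho₁
  · rintro A e x₁ y hc hs ⟨n₁, o₁, hc', ho₁⟩ ⟨n₂, o₂, hs', ho₂⟩
    rcases o₁ with _ | ⟨z₁, c₁⟩; · simp at ho₁
    rcases o₂ with _ | ⟨z₂, c₂⟩
    swap; · simp at ho₂
    simp only [Option.map_some, Option.some_inj] at ho₁
    subst ho₁
    refine ⟨max n₁ n₂ + 1, none, ?_, rfl⟩
    rw [evalS_nt_succ, evalC_mono G hc' (Nat.le_max_left n₁ n₂)]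
    dsimp only
    rw [List.drop_left, evalS_mono G hs' (by omega : n₂ ≤ max n₁ n₂ + 1)]
  · intro x
    exact ⟨0, none, by simp, rfl⟩
  · rintro e es x x₁ hm ⟨n, o', he, ho⟩
    rcases o' with _ | ⟨z, c⟩; · simp at ho
    refine ⟨n + 1, some (z, c), ?_, ho⟩
    rw [evalC_succ, he]
  · rintro e es x o hm hcm ⟨n₁, o₁, he, ho₁⟩ ⟨n₂, o₂, hc', ho₂⟩
    rcases o₁ with _ | ⟨z, c⟩
    swap; · simp at ho₁
    refine ⟨max n₁ n₂ + 1, o₂, ?_, ho₂⟩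
    rw [evalC_succ, evalS_mono G he (Nat.le_max_left n₁ n₂)]
    exact evalC_mono G hc' (by omega)

theorem smatch_det {G : OCFG N T} {e : List (Sym N T)} {x : List T} {o₁ o₂ : Option (List T)}
    (h₁ : SMatch G e x o₁) (h₂ : SMatch G e x o₂) : o₁ = o₂ := by
  obtain ⟨n₁, o₁', he₁, ho₁⟩ := complete_S h₁
  obtain ⟨n₂, o₂', he₂, ho₂⟩ := complete_S h₂
  have e₁ := evalS_mono G he₁ (Nat.le_max_left n₁ n₂)
  have e₂ := evalS_mono G he₂ (Nat.le_max_right n₁ n₂)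
  rw [e₁, Option.some_inj] at e₂
  rw [ho₁, ho₂, e₂]

end Ocfg
namespace Ocfg
variable {N T : Type}
attribute [local instance] Classical.propDecidable

/-- Prepending matched terminals. -/
theorem evalS_tm_prefix (G : OCFG N T) (n : ℕ) (u : List T) (e : List (Sym N T)) (y : List T) :
    evalS G n (u.map Sym.tm ++ e) (u ++ y) =
      Option.map (Option.map fun p => (u ++ p.1, p.2)) (evalS G n e y) := by
  induction u with
  | nil =>
    simp only [List.map_nil, List.nil_append]
    rcases h : evalS G n e y with _ | (_ | ⟨z, c⟩) <;> simp
  | cons a u ih =>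
    simp only [List.map_cons, List.cons_append]
    rw [evalS_tm_cons, if_pos rfl, ih]
    rcases h : evalS G n e y with _ | (_ | ⟨z, c⟩) <;> simp

/-- Stripping matched terminals. -/
theorem evalS_tm_strip (G : OCFG N T) (n : ℕ) (u : List T) (e : List (Sym N T)) :
    ∀ (x z : List T) (c : ℕ), evalS G n (u.map Sym.tm ++ e) x = some (some (z, c)) →
      ∃ y z', x = u ++ y ∧ z = u ++ z' ∧ evalS G n e y = some (some (z', c)) := by
  induction u with
  | nil => intro x z c h; exact ⟨x, z, rfl, rfl, h⟩
  | cons a u ih =>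
    intro x z c h
    cases x with
    | nil => simp at h
    | cons b x' =>
      simp only [List.map_cons, List.cons_append] at h
      rw [evalS_tm_cons] at h
      by_cases hab : a = b
      · subst hab
        rw [if_pos rfl] at h
        rcases he : evalS G n (u.map Sym.tm ++ e) x' with _ | (_ | ⟨z'', c''⟩) <;>
          rw [he] at h <;> dsimp only at h
        · exact absurd h (by simp)
        · exact absurd h (by simp)
        · obtain ⟨rfl, rfl⟩ : a :: z'' = z ∧ c'' = c := by simpa using h
          obtain ⟨y, z', rfl, rfl, hev⟩ := ih x' z'' c'' he
          exact ⟨y, z', by simp, by simp, hev⟩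
      · rw [if_neg hab] at h; simp at h

/-- Matching a pure terminal string. -/
theorem evalS_terminal (G : OCFG N T) {n : ℕ} {t x z : List T} {c : ℕ}
    (h : evalS G n (t.map Sym.tm) x = some (some (z, c))) :
    z = t ∧ c = 0 ∧ x = t ++ x.drop t.length := by
  have h' : evalS G n (t.map Sym.tm ++ []) x = some (some (z, c)) := by simpa using h
  obtain ⟨y, z', rfl, rfl, hev⟩ := evalS_tm_strip G n t [] x z c h'
  simp only [evalS_nil, Option.some_inj] at hev
  obtain ⟨rfl, rfl⟩ : z' = [] ∧ c = 0 := by simpa using hev.symm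
  simp

/-- Concatenating successful matches. -/
theorem evalS_concat (G : OCFG N T) (e₁ : List (Sym N T)) :
    ∀ (n₁ n₂ : ℕ) (e₂ : List (Sym N T)) (y z₁ z₂ : List T) (c₁ c₂ : ℕ),
      evalS G n₁ e₁ y = some (some (z₁, c₁)) →
      evalS G n₂ e₂ (y.drop z₁.length) = some (some (z₂, c₂)) →
      ∃ n, evalS G n (e₁ ++ e₂) y = some (some (z₁ ++ z₂, c₁ + c₂)) := by
  induction e₁ with
  | nil =>
    intro n₁ n₂ e₂ y z₁ z₂ c₁ c₂ h₁ h₂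
    simp only [evalS_nil, Option.some_inj] at h₁
    obtain ⟨rfl, rfl⟩ : z₁ = [] ∧ c₁ = 0 := by simpa using h₁.symm
    exact ⟨n₂, by simpa using h₂⟩
  | cons s e₁' ih =>
    intro n₁ n₂ e₂ y z₁ z₂ c₁ c₂ h₁ h₂
    cases s with
    | tm a =>
      cases y with
      | nil => simp at h₁
      | cons b y' =>
        rw [evalS_tm_cons] at h₁
        by_cases hab : a = b
        · subst hab
          rw [if_pos rfl] at h₁
          rcases he : evalS G n₁ e₁' y' with _ | (_ | ⟨z', c'⟩) <;>
            rw [he] at h₁ <;> dsimp only at h₁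
          · exact absurd h₁ (by simp)
          · exact absurd h₁ (by simp)
          · obtain ⟨rfl, rfl⟩ : a :: z' = z₁ ∧ c' = c₁ := by simpa using h₁
            obtain ⟨n, hn⟩ := ih n₁ n₂ e₂ y' z' z₂ c' c₂ he (by simpa using h₂)
            refine ⟨n, ?_⟩
            simp only [List.cons_append]
            rw [evalS_tm_cons, if_pos rfl, hn]
        · rw [if_neg hab] at h₁; simp at h₁
    | nt A =>
      cases n₁ with
      | zero => simp at h₁
      | succ m =>
        rw [evalS_nt_succ] at h₁
        rcases hc : evalC G m (G.prods A) y with _ | (_ | ⟨xB, cB⟩) <;>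
          rw [hc] at h₁ <;> dsimp only at h₁
        · exact absurd h₁ (by simp)
        · exact absurd h₁ (by simp)
        · rcases hs : evalS G (m+1) e₁' (y.drop xB.length) with _ | (_ | ⟨zr, cr⟩) <;>
            rw [hs] at h₁ <;> dsimp only at h₁
          · exact absurd h₁ (by simp)
          · exact absurd h₁ (by simp)
          · obtain ⟨rfl, rfl⟩ : xB ++ zr = z₁ ∧ 1 + cB + cr = c₁ := by simpa using h₁
            have h₂' : evalS G n₂ e₂ ((y.drop xB.length).drop zr.length)
                = some (some (z₂, c₂)) := by
              rw [List.drop_drop]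
              simpa [Nat.add_comm] using h₂
            obtain ⟨n, hn⟩ := ih (m+1) n₂ e₂ _ zr z₂ cr c₂ hs h₂'
            refine ⟨max m n + 1, ?_⟩
            simp only [List.cons_append]
            rw [evalS_nt_succ, evalC_mono G hc (Nat.le_max_left m n)]
            dsimp only
            rw [evalS_mono G hn (by omega : n ≤ max m n + 1)]
            dsimp only
            simp only [Option.some_inj, Prod.mk.injEq]
            exact ⟨by simp, by omega⟩

/-- Decomposing a successful choice. -/
theorem evalC_cases (G : OCFG N T) (rs : List (List (Sym N T))) :
    ∀ (m : ℕ) (y z : List T) (c : ℕ), evalC G m rs y = some (some (z, c)) →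
      ∃ (k i : ℕ) (r : List (Sym N T)), m = k + 1 ∧ rs[i]? = some r ∧ evalS G k r y = some (some (z, c)) ∧
        ∀ j r', j < i → rs[j]? = some r' → evalS G k r' y = some none := by
  induction rs with
  | nil => intro m y z c h; simp at h
  | cons r₀ rs' ih =>
    intro m y z c h
    cases m with
    | zero => simp at h
    | succ k =>
      rw [evalC_succ] at h
      rcases hs : evalS G k r₀ y with _ | (_ | ⟨z', c'⟩) <;> rw [hs] at h <;> dsimp only at h
      · exact absurd h (by simp)
      · obtain ⟨k', i, r, hk, hget, hev, hfail⟩ := ih (k+1) y z c h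
        obtain rfl : k = k' := by omega
        have hg2 : (r₀ :: rs')[i+1]? = some r := by
          rw [List.getElem?_cons_succ]; exact hget
        refine ⟨k, i + 1, r, rfl, hg2, hev, ?_⟩
        intro j r' hj hget'
        cases j with
        | zero =>
          simp only [List.getElem?_cons_zero, Option.some_inj] at hget'
          rw [← hget']; exact hs
        | succ j' =>
          rw [List.getElem?_cons_succ] at hget'
          exact hfail j' r' (by omega) hget'
      · obtain ⟨rfl, rfl⟩ : z' = z ∧ c' = c := by simpa using h
        exact ⟨k, 0, r₀, rfl, by simp, hs, by omega⟩

/-- Building a successful choice from SMatch-level evidence. -/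
theorem evalC_build (G : OCFG N T) (y v' : List T) :
    ∀ (i : ℕ) (rs : List (List (Sym N T))) (r : List (Sym N T)),
      rs[i]? = some r → SMatch G r y (some v') →
      (∀ j r', j < i → rs[j]? = some r' → SMatch G r' y none) →
      ∃ n c, evalC G n rs y = some (some (v', c)) := by
  intro i
  induction i with
  | zero =>
    intro rs r hget hs _
    cases rs with
    | nil => simp at hget
    | cons r₀ rs' =>
      simp only [List.getElem?_cons_zero, Option.some_inj] at hget
      subst hget
      obtain ⟨n, o', he, ho⟩ := complete_S hs
      rcases o' with _ | ⟨z, c⟩; · simp at ho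
      simp only [Option.map_some, Option.some_inj] at ho
      subst ho
      exact ⟨n + 1, c, by rw [evalC_succ, he]⟩
  | succ i ih =>
    intro rs r hget hs hf
    cases rs with
    | nil => simp at hget
    | cons r₀ rs' =>
      have h₀ : SMatch G r₀ y none := hf 0 r₀ (by omega) (by simp)
      obtain ⟨n₀, o₀, he₀, ho₀⟩ := complete_S h₀
      rcases o₀ with _ | p
      swap; · simp at ho₀
      rw [List.getElem?_cons_succ] at hget
      obtain ⟨n₁, c, hc⟩ := ih rs' r hget hs
        (fun j r' hj hg => hf (j+1) r' (by omega)
          (by rw [List.getElem?_cons_succ]; exact hg))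
      refine ⟨max n₀ n₁ + 1, c, ?_⟩
      rw [evalC_succ, evalS_mono G he₀ (Nat.le_max_left n₀ n₁)]
      exact evalC_mono G hc (by omega)

end Ocfg
namespace Ocfg
variable {N T : Type}

/-- Every sentential form is all-terminal or has a leftmost nonterminal. -/
theorem decompose (u : List (Sym N T)) :
    (∃ t : List T, u = t.map Sym.tm) ∨
    ∃ (u' : List T) (A : N) (u₂ : List (Sym N T)),
      u = u'.map Sym.tm ++ Sym.nt A :: u₂ := by
  induction u with
  | nil => exact Or.inl ⟨[], rfl⟩
  | cons s u ih =>
    cases s with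
    | nt A => exact Or.inr ⟨[], A, u, rfl⟩
    | tm a =>
      rcases ih with ⟨t, rfl⟩ | ⟨u', A, u₂, rfl⟩
      · exact Or.inl ⟨a :: t, rfl⟩
      · exact Or.inr ⟨a :: u', A, u₂, rfl⟩

/-- Uniqueness of the leftmost-nonterminal decomposition. -/
theorem leftmost_unique : ∀ (u' v' : List T) (A B : N) (u₂ v₂ : List (Sym N T)),
    u'.map Sym.tm ++ Sym.nt A :: u₂ = v'.map Sym.tm ++ Sym.nt B :: v₂ →
    u' = v' ∧ A = B ∧ u₂ = v₂ := by
  intro u'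
  induction u' with
  | nil =>
    intro v' A B u₂ v₂ h
    cases v' with
    | nil => simpa using h
    | cons b v' => simp at h
  | cons a u' ih =>
    intro v' A B u₂ v₂ h
    cases v' with
    | nil => simp at h
    | cons b v' =>
      simp only [List.map_cons, List.cons_append, List.cons.injEq, Sym.tm.injEq] at h
      obtain ⟨rfl, h⟩ := h
      obtain ⟨rfl, rfl, rfl⟩ := ih v' A B u₂ v₂ h
      exact ⟨rfl, rfl, rfl⟩

/-- The PEG step is deterministic. -/
theorem pstep_det {G : OCFG N T} {w : List T} {u v₁ v₂ : List (Sym N T)}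
    (h₁ : PStep G w u v₁) (h₂ : PStep G w u v₂) : v₁ = v₂ := by
  obtain ⟨u', A, u₂, i, r, hget, hu, hv, ⟨x, hsucc⟩, hfail⟩ := h₁
  obtain ⟨u'', A', u₂', i', r', hget', hu', hv', ⟨x', hsucc'⟩, hfail'⟩ := h₂
  obtain ⟨rfl, rfl, rfl⟩ := leftmost_unique u' u'' A A' u₂ u₂' (hu.symm.trans hu')
  have hii : i = i' := by
    rcases Nat.lt_trichotomy i i' with hlt | heq | hgt
    · exact absurd (smatch_det hsucc (hfail' i r hlt hget)) (by simp)
    · exact heq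
    · exact absurd (smatch_det hsucc' (hfail i' r' hgt hget')) (by simp)
  subst hii
  rw [hget] at hget'
  obtain rfl : r = r' := by simpa using hget'
  rw [hv, hv']

/-- Core analysis: from a successful evaluation of a sentential form with a
leftmost nonterminal, extract the (unique) PEG step, preserving the result
and strictly decreasing the rule count. -/
theorem core (G : OCFG N T) (w : List T) (u' : List T) (A : N) (u₂ : List (Sym N T))
    (n : ℕ) (z : List T) (c : ℕ)
    (h : evalS G n (u'.map Sym.tm ++ Sym.nt A :: u₂) w = some (some (z, c))) :
    ∃ v, PStep G w (u'.map Sym.tm ++ Sym.nt A :: u₂) v ∧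
      ∃ (n' c' : ℕ), c' < c ∧ evalS G n' v w = some (some (z, c')) := by
  obtain ⟨y, z₂, hw, hz, hev⟩ := evalS_tm_strip G n u' (Sym.nt A :: u₂) w z c h
  cases n with
  | zero => simp at hev
  | succ m =>
    rw [evalS_nt_succ] at hev
    rcases hc : evalC G m (G.prods A) y with _ | (_ | ⟨x₁, c₁⟩) <;>
      rw [hc] at hev <;> dsimp only at hev
    · exact absurd hev (by simp)
    · exact absurd hev (by simp)
    · rcases hs : evalS G (m+1) u₂ (y.drop x₁.length) with _ | (_ | ⟨x₂, c₂⟩) <;>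
        rw [hs] at hev <;> dsimp only at hev
      · exact absurd hev (by simp)
      · exact absurd hev (by simp)
      · obtain ⟨hz₂, hc'⟩ : x₁ ++ x₂ = z₂ ∧ 1 + c₁ + c₂ = c := by simpa using hev
        obtain ⟨k, i, r, hmk, hget, hevr, hfail⟩ := evalC_cases G (G.prods A) m y x₁ c₁ hc
        refine ⟨u'.map Sym.tm ++ r ++ u₂, ⟨u', A, u₂, i, r, hget, rfl, rfl, ?_, ?_⟩, ?_⟩
        · refine ⟨x₁, ?_⟩
          have := evalS_tm_prefix G k u' r y
          rw [hevr] at this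
          rw [hw]
          have hsm := evalS_sound G this
          simpa using hsm
        · intro j r' hj hg
          have hf := hfail j r' hj hg
          have := evalS_tm_prefix G k u' r' y
          rw [hf] at this
          rw [hw]
          have hsm := evalS_sound G this
          simpa using hsm
        · obtain ⟨n₀, hcat⟩ := evalS_concat G r k (m+1) u₂ y x₁ x₂ c₁ c₂ hevr hs
          have := evalS_tm_prefix G n₀ u' (r ++ u₂) y
          rw [hcat] at this
          refine ⟨n₀, c₁ + c₂, by omega, ?_⟩
          rw [hw, hz, ← hz₂, List.append_assoc]
          simpa using this

end Ocfg
namespace Ocfg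
variable {N T : Type}

/-- Forward: successful evaluation yields a PEG derivation. -/
theorem forward (G : OCFG N T) (w : List T) :
    ∀ (c n : ℕ) (u : List (Sym N T)) (z : List T),
      evalS G n u w = some (some (z, c)) →
      Relation.ReflTransGen (PStep G w) u (z.map Sym.tm) := by
  intro c
  induction c using Nat.strong_induction_on with
  | _ c IH =>
    intro n u z h
    rcases decompose u with ⟨t, rfl⟩ | ⟨u', A, u₂, rfl⟩
    · obtain ⟨rfl, -, -⟩ := evalS_terminal G h
      exact Relation.ReflTransGen.refl
    · obtain ⟨v, hstep, n', c', hlt, hev⟩ := core G w u' A u₂ n z c h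
      exact Relation.ReflTransGen.head hstep (IH c' hlt n' v z hev)

/-- Evaluation success is preserved along PEG derivations. -/
theorem propagate (G : OCFG N T) (w z : List T) {u₀ u₁ : List (Sym N T)}
    (hd : Relation.ReflTransGen (PStep G w) u₀ u₁)
    (h : ∃ n c, evalS G n u₀ w = some (some (z, c))) :
    ∃ n c, evalS G n u₁ w = some (some (z, c)) := by
  induction hd with
  | refl => exact h
  | tail hab hbc ih =>
    obtain ⟨n, c, hev⟩ := ih
    obtain ⟨u', A, u₂, i, r, hget, hu, hv, hsucc, hfail⟩ := hbc
    subst hu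
    obtain ⟨v₀, hstep₀, n', c', _, hev₀⟩ := core G w u' A u₂ n z c hev
    have : v₀ = _ := pstep_det hstep₀ ⟨u', A, u₂, i, r, hget, rfl, hv, hsucc, hfail⟩
    rw [this] at hev₀
    exact ⟨n', c', hev₀⟩

theorem pstep_to_step {G : OCFG N T} {w : List T} {u v : List (Sym N T)}
    (h : PStep G w u v) : G.Step u v := by
  obtain ⟨u', A, u₂, i, r, hget, hu, hv, -, -⟩ := h
  exact ⟨u'.map Sym.tm, u₂, A, r, List.mem_of_getElem? hget, hu, hv⟩

end Ocfg

open Ocfg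

/-- `(S,w) ⇝_G w'` iff `S ⇒⁺_w w'`; moreover `S ⇒⁺_w w'` implies
`S ⇒⁺ w'` in the corresponding CFG (prioritized choice replaced by
nondeterministic choice). -/
theorem stmt16 {N T : Type} (G : OCFG N T) (w w' : List T) :
    (SMatch G [Sym.nt G.start] w (some w') ↔
      Relation.TransGen (PStep G w) [Sym.nt G.start] (w'.map Sym.tm)) ∧
    (Relation.TransGen (PStep G w) [Sym.nt G.start] (w'.map Sym.tm) →
      Relation.TransGen G.Step [Sym.nt G.start] (w'.map Sym.tm)) := by
  constructor
  · constructor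
    · intro hm
      obtain ⟨n, o', he, ho⟩ := complete_S hm
      rcases o' with _ | ⟨z, c⟩; · simp at ho
      obtain rfl : w' = z := by simpa using ho
      have he' : evalS G n (([] : List T).map Sym.tm ++ Sym.nt G.start :: []) w
          = some (some (w', c)) := by simpa using he
      obtain ⟨v, hstep, n', c', _, hev⟩ := core G w [] G.start [] n w' c he'
      have hrest := forward G w c' n' v w' hev
      exact Relation.TransGen.head' (by simpa using hstep) hrest
    · intro hd
      -- extract the first step
      obtain ⟨v, hstep, hrest⟩ := Relation.TransGen.head'_iff.mp hd
      obtain ⟨u', A, u₂, i, r, hget, hu, hv, ⟨x, hsucc⟩, hfail⟩ := hstep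
      -- the decomposition of [nt S] forces u' = [], A = S, u₂ = []
      obtain ⟨rfl, rfl, rfl⟩ : u' = [] ∧ A = G.start ∧ u₂ = [] := by
        cases u' with
        | nil => simpa using hu.symm
        | cons a u' => simp at hu
      simp only [List.map_nil, List.nil_append] at hsucc hfail hv
      obtain ⟨n, c, hcb⟩ := evalC_build G w x i (G.prods G.start) r hget hsucc
        (fun j r' hj hg => by simpa using hfail j r' hj hg)
      have hini : evalS G (n+1) [Sym.nt G.start] w = some (some (x, 1 + c)) := by
        rw [evalS_nt_succ, hcb]
        simp
      -- propagate the invariant from [nt S] through the whole derivation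
      have hall : Relation.ReflTransGen (PStep G w) [Sym.nt G.start] (w'.map Sym.tm) :=
        hd.to_reflTransGen
      obtain ⟨n₁, c₁, hfin⟩ := propagate G w x hall ⟨n+1, 1+c, hini⟩
      obtain ⟨rfl, -, -⟩ := evalS_terminal G hfin
      have := evalS_sound G hini
      simpa using this
  · intro hd
    exact Relation.TransGen.mono (fun a b h => pstep_to_step h) _ _ hd
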